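/- arXiv:2410.18493 — 6 statements merged into one kernel-verified Lean document; each statement's English description precedes it below -/
import Mathlib

section
/- Let R be a commutative Noetherian ring and let T = R[[X]]_X be the localization of the power series ring R[[X]] at the multiplicative set of powers of X. Then T is a faithfully flat R-algebra. -/
set_option maxHeartbeats 1000000
set_option synthInstance.maxHeartbeats 1000000

/-- The height of a prime ideal: the Krull dimension of the localization at it. -/
noncomputable def ht {R : Type*} [CommRing R] (p : Ideal R) [p.IsPrime] : WithBot (WithTop ℕ) :=
  ringKrullDim (Localization.AtPrime p)

/-- A (Noetherian) local ring is regular if its maximal ideal is generated by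
`dim` many elements. -/
def IsRegularLocal (A : Type*) [CommRing A] [IsLocalRing A] : Prop :=
  IsNoetherianRing A ∧ ∃ s : Finset A,
    Ideal.span (s : Set A) = IsLocalRing.maximalIdeal A ∧
    (s.card : WithBot (WithTop ℕ)) = ringKrullDim A

/-- A commutative ring is regular if all its localizations at primes are regular local. -/
def IsRegularRing' (R : Type*) [CommRing R] : Prop :=
  ∀ (p : Ideal R) [p.IsPrime], IsRegularLocal (Localization.AtPrime p)

/-- A local ring is Cohen-Macaulay if there is a regular sequence in the maximal ideal
of length equal to the Krull dimension. -/
def IsCMLocal (A : Type*) [CommRing A] [IsLocalRing A] : Prop :=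
  ∃ rs : List A, (∀ x ∈ rs, x ∈ IsLocalRing.maximalIdeal A) ∧
    RingTheory.Sequence.IsRegular A rs ∧
    (rs.length : WithBot (WithTop ℕ)) = ringKrullDim A

/-- A commutative ring is Cohen-Macaulay if all localizations at primes are CM local. -/
def IsCMRing (R : Type*) [CommRing R] : Prop :=
  ∀ (p : Ideal R) [p.IsPrime], IsCMLocal (Localization.AtPrime p)

/-- Serre's condition `R_i`: the localization at every prime of height at most `i`
is a regular local ring. -/
def SerreR (A : Type*) [CommRing A] (i : ℕ) : Prop :=
  ∀ (q : Ideal A) [q.IsPrime], ht q ≤ (i : WithBot (WithTop ℕ)) →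
    IsRegularLocal (Localization.AtPrime q)

/-- `T = R[[X]]_X`, the localization of the power series ring at `X`. -/
noncomputable abbrev PST (R : Type*) [CommRing R] : Type _ :=
  Localization.Away (PowerSeries.X (R := R))

noncomputable instance (R : Type*) [CommRing R] : Algebra R (PST R) :=
  ((algebraMap (PowerSeries R) (PST R)).comp (algebraMap R (PowerSeries R))).toAlgebra

/-! ### Auxiliary material: flatness of `R[[X]]` over a Noetherian ring `R`,
via the identification of `R[[X]]` with the `(X)`-adic completion of `R[X]`. -/

open PowerSeries Polynomial in
/-- The ideal `(X)` in `R[X]`. -/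
noncomputable abbrev PSI (R : Type) [CommRing R] : Ideal (Polynomial R) :=
  Ideal.span {Polynomial.X}

namespace PSAux

open PowerSeries Polynomial

variable (R : Type) [CommRing R]

lemma mem_smul_top_iff' (n : ℕ) (p : Polynomial R) :
    p ∈ (PSI R ^ n • ⊤ : Submodule (Polynomial R) (Polynomial R)) ↔ ∀ k < n, p.coeff k = 0 := by
  rw [smul_eq_mul, Ideal.mul_top, Ideal.span_singleton_pow, Ideal.mem_span_singleton]
  exact Polynomial.X_pow_dvd_iff

instance : IsScalarTower R (Polynomial R) (PowerSeries R) :=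
  IsScalarTower.of_algebraMap_eq (fun r => (Polynomial.coe_C r).symm)

lemma psAlgebraMap_eq (p : Polynomial R) :
    algebraMap (Polynomial R) (PowerSeries R) p = (p : PowerSeries R) := by
  show (Polynomial.coeToPowerSeries.algHom R) p = _
  rw [Polynomial.coeToPowerSeries.algHom_apply]
  simp [PowerSeries.map_id]

/-- The natural map from power series to the `(X)`-adic completion of `R[X]`. -/
noncomputable def toACfun (f : PowerSeries R) : AdicCompletion (PSI R) (Polynomial R) :=
  ⟨fun n => Submodule.Quotient.mk (f.trunc n), by
    intro m n hmn
    rw [Submodule.mapQ_apply, LinearMap.id_apply, Submodule.Quotient.eq, mem_smul_top_iff']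
    intro k hk
    simp [PowerSeries.coeff_trunc, hk, hk.trans_le hmn]⟩

lemma toACfun_val (f : PowerSeries R) (n : ℕ) :
    (toACfun R f).val n = Submodule.Quotient.mk (f.trunc n) := rfl

/-- The natural linear map from power series to the `(X)`-adic completion of `R[X]`. -/
noncomputable def toAC : PowerSeries R →ₗ[Polynomial R] AdicCompletion (PSI R) (Polynomial R) where
  toFun := toACfun R
  map_add' f g := by
    apply AdicCompletion.ext
    intro n
    rw [AdicCompletion.val_add_apply, toACfun_val, toACfun_val, toACfun_val,
      ← Submodule.Quotient.mk_add, map_add]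
  map_smul' p f := by
    apply AdicCompletion.ext
    intro n
    rw [RingHom.id_apply, AdicCompletion.val_smul_apply, toACfun_val, toACfun_val,
      ← Submodule.Quotient.mk_smul, Submodule.Quotient.eq, mem_smul_top_iff']
    intro k hk
    rw [Polynomial.coeff_sub, smul_eq_mul, Polynomial.coeff_mul,
      PowerSeries.coeff_trunc, if_pos hk, Algebra.smul_def, psAlgebraMap_eq,
      PowerSeries.coeff_mul]
    rw [sub_eq_zero]
    refine Finset.sum_congr rfl ?_
    rintro ⟨i, j⟩ hij
    rw [Finset.HasAntidiagonal.mem_antidiagonal] at hij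
    rw [Polynomial.coeff_coe, PowerSeries.coeff_trunc,
      if_pos (lt_of_le_of_lt (hij ▸ Nat.le_add_left j i) hk)]

lemma toAC_bijective : Function.Bijective (toAC R) := by
  constructor
  · rw [injective_iff_map_eq_zero]
    intro f hf
    ext k
    have h : (toACfun R f).val (k + 1) = 0 := by
      rw [show toACfun R f = toAC R f from rfl, hf]; rfl
    rw [toACfun_val, Submodule.Quotient.mk_eq_zero, mem_smul_top_iff'] at h
    have := h k (Nat.lt_succ_self k)
    rwa [PowerSeries.coeff_trunc, if_pos (Nat.lt_succ_self k)] at this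
  · intro x
    choose rep hrep using fun n => Submodule.Quotient.mk_surjective _ (x.val n)
    refine ⟨PowerSeries.mk (fun k => (rep (k + 1)).coeff k), ?_⟩
    have key : ∀ {k n : ℕ}, k < n → (rep n).coeff k = (rep (k + 1)).coeff k := by
      intro k n hk
      have h2 := x.property (show k + 1 ≤ n from hk)
      rw [← hrep n, Submodule.mapQ_apply, LinearMap.id_apply, ← hrep (k+1),
        Submodule.Quotient.eq, mem_smul_top_iff'] at h2
      have := h2 k (Nat.lt_succ_self k)
      rwa [Polynomial.coeff_sub, sub_eq_zero] at this
    apply AdicCompletion.ext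
    intro n
    rw [show (toAC R _).val n = Submodule.Quotient.mk _ from toACfun_val R _ n, ← hrep n,
      Submodule.Quotient.eq, mem_smul_top_iff']
    intro k hk
    rw [Polynomial.coeff_sub, PowerSeries.coeff_trunc, if_pos hk, PowerSeries.coeff_mk,
      key hk, sub_self]

/-- The monomial basis of `R[X]`. -/
noncomputable def polyBasis : Module.Basis ℕ R (Polynomial R) :=
  Polynomial.basisMonomials R

instance : Module.Free R (Polynomial R) := Module.Free.of_basis (polyBasis R)

/-- `R[[X]]` is flat over a Noetherian commutative ring `R`. -/
theorem psFlat [IsNoetherianRing R] : Module.Flat R (PowerSeries R) := by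
  haveI : Module.Flat (Polynomial R) (AdicCompletion (PSI R) (Polynomial R)) :=
    AdicCompletion.flat_of_isNoetherian (PSI R)
  haveI : Module.Flat (Polynomial R) (PowerSeries R) :=
    Module.Flat.of_linearEquiv
      (LinearEquiv.ofBijective (toAC R) (toAC_bijective R))
  exact Module.Flat.trans R (Polynomial R) (PowerSeries R)

/-! ### Faithfulness -/

lemma smul_eq_algebraMap_mul (r : R) (x : PST R) :
    r • x = algebraMap R (PST R) r * x := by
  refine Localization.induction_on x ?_
  rintro ⟨a, s⟩
  rw [Localization.smul_mk]
  rw [show algebraMap R (PST R) r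
    = algebraMap (PowerSeries R) (PST R) (PowerSeries.C r) from rfl]
  rw [← Localization.mk_one_eq_algebraMap, Localization.mk_mul, one_mul]
  congr 1
  rw [Algebra.smul_def]
  rfl

theorem smul_top_ne_top (m : Ideal R) (hm : m.IsMaximal) :
    m • (⊤ : Submodule R (PST R)) ≠ ⊤ := by
  haveI := hm
  intro htop
  set k := R ⧸ m
  set g : PowerSeries R →+* LaurentSeries k :=
    ((HahnSeries.ofPowerSeries ℤ k) : PowerSeries k →+* LaurentSeries k).comp
      (PowerSeries.map (Ideal.Quotient.mk m)) with hg
  have hunits : ∀ y : Submonoid.powers (PowerSeries.X (R := R)), IsUnit (g y) := by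
    rintro ⟨-, n, rfl⟩
    rw [map_pow]
    refine IsUnit.pow n ?_
    have : g PowerSeries.X = algebraMap (PowerSeries k) (LaurentSeries k) PowerSeries.X := by
      simp [hg]
    rw [this]
    exact IsLocalization.map_units (M := Submonoid.powers (PowerSeries.X (R := k)))
      (LaurentSeries k) ⟨PowerSeries.X, 1, pow_one _⟩
  set ψ : PST R →+* LaurentSeries k := IsLocalization.lift hunits with hψ
  have hψ0 : ∀ r ∈ m, ψ (algebraMap R (PST R) r) = 0 := by
    intro r hr
    have : algebraMap R (PST R) r
        = algebraMap (PowerSeries R) (PST R) (PowerSeries.C r) := rfl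
    rw [this, hψ, IsLocalization.lift_eq, hg]
    simp [PowerSeries.map_C, Ideal.Quotient.eq_zero_iff_mem.mpr hr]
  have hzero : ∀ y ∈ (m • ⊤ : Submodule R (PST R)), ψ y = 0 := by
    intro y hy
    refine Submodule.smul_induction_on hy ?_ ?_
    · intro r hr x _
      rw [smul_eq_algebraMap_mul, map_mul, hψ0 r hr, zero_mul]
    · intro x y hx hy
      rw [map_add, hx, hy, add_zero]
  have h1 : ψ 1 = 0 := hzero 1 (by rw [htop]; trivial)
  rw [map_one] at h1
  exact one_ne_zero h1

end PSAux

/-- T = R[[X]]_X is a faithfully flat R-algebra. -/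
theorem stmt_0 (R : Type) [CommRing R] [IsNoetherianRing R] :
    Module.FaithfullyFlat R (PST R) := by
  haveI : Module.Flat R (PowerSeries R) := PSAux.psFlat R
  haveI flat : Module.Flat R (PST R) := Module.Flat.trans R (PowerSeries R) (PST R)
  exact { toFlat := flat,
          submodule_ne_top := fun m hm => PSAux.smul_top_ne_top R m hm }
end

section
/- Let R be a commutative Noetherian ring, S = R[[X]] and T = S_X. If P is a prime ideal of R, then the extension PT is a prime ideal of T and PT ∩ R = P. -/
set_option maxHeartbeats 1000000
set_option synthInstance.maxHeartbeats 1000000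

lemma key {R : Type} [CommRing R] [IsNoetherianRing R] (P : Ideal R) :
    P.map (PowerSeries.C (R := R)) = RingHom.ker (PowerSeries.map (Ideal.Quotient.mk P)) := by
  apply le_antisymm
  · rw [Ideal.map_le_iff_le_comap]
    intro r hr
    simp only [Ideal.mem_comap, RingHom.mem_ker]
    ext n
    simp [PowerSeries.coeff_C, apply_ite (Ideal.Quotient.mk P), Ideal.Quotient.eq_zero_iff_mem.2 hr]
  · intro f hf
    obtain ⟨s, hs⟩ := (isNoetherianRing_iff_ideal_fg R).mp ‹_› P
    have hc : ∀ n : ℕ, ∃ g : R → R, (∑ i ∈ s, g i • i) = PowerSeries.coeff n f := by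
      intro n
      suffices h : PowerSeries.coeff n f ∈ Ideal.span (s : Set R) by
        obtain ⟨g, -, hg⟩ := Submodule.mem_span_finset.mp h
        exact ⟨g, hg⟩
      show PowerSeries.coeff n f ∈ Ideal.span (s : Set R)
      rw [hs]
      have := RingHom.mem_ker.mp hf
      have h2 : PowerSeries.coeff n (PowerSeries.map (Ideal.Quotient.mk P) f) = 0 := by
        rw [this]; simp
      rw [PowerSeries.coeff_map] at h2
      exact Ideal.Quotient.eq_zero_iff_mem.mp h2
    choose g hg using hc
    have : f = ∑ i ∈ s, PowerSeries.mk (fun n => g n i) * PowerSeries.C (R := R) i := by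
      ext n
      rw [map_sum]
      simp only [PowerSeries.coeff_mul_C, PowerSeries.coeff_mk]
      rw [← hg n]
      simp [smul_eq_mul]
    rw [this]
    apply Ideal.sum_mem
    intro i hi
    exact Ideal.mul_mem_left _ _ (Ideal.mem_map_of_mem _ (hs ▸ Ideal.subset_span hi))

/-- PT is prime and PT ∩ R = P. -/
theorem stmt_1 (R : Type) [CommRing R] [IsNoetherianRing R]
    (P : Ideal R) [P.IsPrime] :
    (P.map (algebraMap R (PST R))).IsPrime ∧
    (P.map (algebraMap R (PST R))).comap (algebraMap R (PST R)) = P := by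
  set S := PowerSeries R
  set T := PST R
  set Q : Ideal S := P.map (PowerSeries.C (R := R)) with hQdef
  have hQker := key P
  have hQprime : Q.IsPrime := by
    rw [hQdef, hQker]
    exact RingHom.ker_isPrime _
  have hdis : Disjoint ((Submonoid.powers (PowerSeries.X (R := R)) : Submonoid S) : Set S) (Q : Set S) := by
    rw [Set.disjoint_left]
    rintro x ⟨n, rfl⟩ hx
    rw [hQdef, hQker] at hx
    have : PowerSeries.coeff n ((PowerSeries.map (Ideal.Quotient.mk P)) (PowerSeries.X ^ n)) = 0 := by
      rw [RingHom.mem_ker.mp hx]; simp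
    simp [PowerSeries.coeff_map] at this
  have halg : algebraMap R T = (algebraMap S T).comp (PowerSeries.C (R := R)) := rfl
  have hmap : P.map (algebraMap R T) = Q.map (algebraMap S T) := by
    rw [halg, hQdef, Ideal.map_map]
  have hcomapQ : Q.comap (PowerSeries.C (R := R)) = P := by
    apply le_antisymm
    · intro r hr
      rw [Ideal.mem_comap, hQdef, hQker, RingHom.mem_ker] at hr
      have : Ideal.Quotient.mk P r = 0 := by
        have := congrArg (PowerSeries.coeff 0) hr
        rw [PowerSeries.coeff_map] at this; simpa using this
      exact Ideal.Quotient.eq_zero_iff_mem.mp this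
    · exact Ideal.le_comap_map
  constructor
  · rw [hmap]
    exact IsLocalization.isPrime_of_isPrime_disjoint (Submonoid.powers (PowerSeries.X (R := R))) T Q hQprime hdis
  · rw [hmap, halg, ← Ideal.comap_comap,
      (by exact IsLocalization.comap_map_of_isPrime_disjoint (Submonoid.powers (PowerSeries.X (R := R))) T hQprime hdis :
        Ideal.comap (algebraMap S T) (Q.map (algebraMap S T)) = Q),
      hcomapQ]
end

section
/- Let T be a Noetherian ring whose Jacobson radical J is a radical ideal equal to the intersection of the maximal ideals in any infinite subfamily of its (infinitely many) maximal ideals. Then J is a prime ideal of T. -/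
set_option maxHeartbeats 1000000
set_option synthInstance.maxHeartbeats 1000000

/-- if T is Noetherian with infinitely many maximal ideals and the
intersection of any infinite family of maximal ideals equals the Jacobson radical J,
then J is prime. -/
theorem stmt_9 (T : Type) [CommRing T] [IsNoetherianRing T]
    (hinf : {m : Ideal T | m.IsMaximal}.Infinite)
    (hJ : ∀ Λ ⊆ {m : Ideal T | m.IsMaximal}, Λ.Infinite →
      sInf Λ = (⊥ : Ideal T).jacobson) :
    ((⊥ : Ideal T).jacobson).IsPrime := by
  have hmem : ∀ x : T, x ∈ (⊥ : Ideal T).jacobson ↔ ∀ m : Ideal T, m.IsMaximal → x ∈ m := by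
    intro x
    simp [Ideal.jacobson, Ideal.mem_sInf]
  constructor
  · obtain ⟨m, hm⟩ := hinf.nonempty
    intro h
    have h1 : (1 : T) ∈ m := (hmem 1).mp (h ▸ Submodule.mem_top) m hm
    exact hm.ne_top ((Ideal.eq_top_iff_one m).mpr h1)
  · intro a b hab
    by_contra h
    push_neg at h
    obtain ⟨ha, hb⟩ := h
    have hcover : {m : Ideal T | m.IsMaximal} ⊆
        {m : Ideal T | m.IsMaximal ∧ a ∈ m} ∪ {m : Ideal T | m.IsMaximal ∧ b ∈ m} := by
      intro m hm
      rcases hm.isPrime.mem_or_mem ((hmem _).mp hab m hm) with h' | h'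
      · exact Or.inl ⟨hm, h'⟩
      · exact Or.inr ⟨hm, h'⟩
    rcases Set.infinite_union.mp (hinf.mono hcover) with hA | hB
    · apply ha
      rw [← hJ _ (fun m hm => hm.1) hA]
      exact Ideal.mem_sInf.mpr (fun {m} hm => hm.2)
    · apply hb
      rw [← hJ _ (fun m hm => hm.1) hB]
      exact Ideal.mem_sInf.mpr (fun {m} hm => hm.2)
end

section
/- Let R be a Noetherian ring with infinitely many maximal ideals, all of the same height d. Then the collection C of all intersections ∩_{m ∈ F} m over infinite subsets F of the set of maximal ideals has a maximal element Q, and for any such maximal Q = ∩_{m ∈ F} m, one has Q = ∩_{m ∈ G} m for every infinite subset G ⊆ F. -/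
set_option maxHeartbeats 1000000
set_option synthInstance.maxHeartbeats 1000000

/-- for R Noetherian with countably infinitely many maximal ideals,
all of height d, the family of intersections of infinite sets of maximal ideals has
a maximal element Q = ∩_{m ∈ F} m, and Q = ∩_{m ∈ G} m for every infinite G ⊆ F. -/
theorem stmt_17 (R : Type) [CommRing R] [IsNoetherianRing R] (d : ℕ)
    (hcount : {m : Ideal R | m.IsMaximal}.Countable)
    (hinf : {m : Ideal R | m.IsMaximal}.Infinite)
    (hht : ∀ (m : Ideal R) (hm : m.IsMaximal),
      @ht R _ m hm.isPrime = (d : WithBot (WithTop ℕ))) :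
    ∃ F ⊆ {m : Ideal R | m.IsMaximal}, F.Infinite ∧
      (∀ G ⊆ {m : Ideal R | m.IsMaximal}, G.Infinite →
        sInf F ≤ sInf G → sInf G = sInf F) ∧
      (∀ G ⊆ F, G.Infinite → sInf G = sInf F) := by
  classical
  set C : Set (Ideal R) :=
    {I | ∃ F ⊆ {m : Ideal R | m.IsMaximal}, F.Infinite ∧ sInf F = I} with hC
  have hCne : C.Nonempty :=
    ⟨sInf {m : Ideal R | m.IsMaximal}, {m : Ideal R | m.IsMaximal},
      le_refl _, hinf, rfl⟩
  obtain ⟨Q, ⟨F, hF, hFinf, hQ⟩, hmax⟩ :=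
    (wellFounded_gt (α := Ideal R)).has_min C hCne
  have key : ∀ G ⊆ {m : Ideal R | m.IsMaximal}, G.Infinite →
      sInf F ≤ sInf G → sInf G = sInf F := by
    intro G hG hGinf hle
    have hGC : sInf G ∈ C := ⟨G, hG, hGinf, rfl⟩
    have hnot := hmax _ hGC
    rcases hle.lt_or_eq with hlt | heq
    · exact absurd (hQ ▸ hlt) hnot
    · exact heq.symm
  refine ⟨F, hF, hFinf, key, ?_⟩
  intro G hGF hGinf
  exact key G (hGF.trans hF) hGinf (sInf_le_sInf hGF)
end

section
/- With the construction of localizing a Noetherian ring R at S = R \ ∪_{m ∈ F} m, where F is an infinite set of maximal ideals of R with Q = ∩_{m ∈ F} m maximal among such intersections: for any subset Λ ⊆ F, one has (∩_{m ∈ Λ} m)·T = ∩_{m ∈ Λ} mT, where T = S^{-1}R. -/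
set_option maxHeartbeats 1000000
set_option synthInstance.maxHeartbeats 1000000

/-- The multiplicative set of elements outside every ideal in `F`, for a family `F`
of prime ideals. -/
def outsideAll (R : Type*) [CommRing R] (F : Set (Ideal R))
    (hF : ∀ m ∈ F, m.IsPrime) : Submonoid R where
  carrier := {x | ∀ m ∈ F, x ∉ m}
  one_mem' := fun m hm h1 => (hF m hm).ne_top ((Ideal.eq_top_iff_one m).mpr h1)
  mul_mem' := fun {a b} ha hb m hm hab =>
    ((hF m hm).mem_or_mem hab).elim (ha m hm) (hb m hm)

/-- with T the localization of R away from the union of the maximal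
ideals in F, extension of ideals to T commutes with the (possibly infinite)
intersection over any subset Λ of F. -/
theorem stmt_18 (K : Type) [Field K] [Uncountable K]
    (R : Type) [CommRing R] [IsNoetherianRing R] [Algebra K R] (d : ℕ)
    (hcount : {m : Ideal R | m.IsMaximal}.Countable)
    (hinf : {m : Ideal R | m.IsMaximal}.Infinite)
    (hht : ∀ (m : Ideal R) (hm : m.IsMaximal),
      @ht R _ m hm.isPrime = (d : WithBot (WithTop ℕ)))
    (F : Set (Ideal R)) (hFmax : ∀ m ∈ F, m.IsMaximal) (hF : F.Infinite)
    (hmaximal : ∀ G ⊆ {m : Ideal R | m.IsMaximal}, G.Infinite →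
      sInf F ≤ sInf G → sInf G = sInf F)
    (Λ : Set (Ideal R)) (hΛ : Λ ⊆ F) :
    letI T := Localization (outsideAll R F (fun m hm => (hFmax m hm).isPrime))
    (sInf Λ).map (algebraMap R T) = ⨅ m ∈ Λ, Ideal.map (algebraMap R T) m := by
  set T := Localization (outsideAll R F (fun m hm => (hFmax m hm).isPrime)) with hT
  set M := outsideAll R F (fun m hm => (hFmax m hm).isPrime) with hM
  have hcomap : ∀ m ∈ Λ,
      Ideal.comap (algebraMap R T) (Ideal.map (algebraMap R T) m) = m := by
    intro m hm
    refine IsLocalization.comap_map_of_isPrime_disjoint M T (I := m)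
      ((hFmax m (hΛ hm)).isPrime) ?_
    rw [Set.disjoint_left]
    intro x hx hxm
    exact hx m (hΛ hm) hxm
  have hsInf : sInf Λ =
      Ideal.comap (algebraMap R T) (⨅ m ∈ Λ, Ideal.map (algebraMap R T) m) := by
    rw [Ideal.comap_iInf]
    simp only [Ideal.comap_iInf]
    rw [sInf_eq_iInf]
    exact iInf_congr fun m => iInf_congr fun hm => (hcomap m hm).symm
  rw [hsInf, IsLocalization.map_comap M T]
end

section
/- With R, F, Q, S, T as in the construction (T = S^{-1}R with S = R \ ∪_{m∈F} m): the maximal ideals of T are precisely the ideals mT for m ∈ F, these are pairwise distinct, and QT equals the Jacobson radical of T. -/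
set_option maxHeartbeats 1000000
set_option synthInstance.maxHeartbeats 1000000

lemma exists_ne_map_eq {K : Type} [Uncountable K] {ι : Type} (C : Set ι) (hC : C.Countable)
    (f : K → ι) (hf : ∀ t, f t ∈ C) : ∃ t t', t ≠ t' ∧ f t = f t' := by
  by_contra h
  push_neg at h
  have hinj : Function.Injective (fun t => (⟨f t, hf t⟩ : C)) := by
    intro a b hab
    by_contra hne
    exact (h a b hne) (congrArg Subtype.val hab)
  have : Countable C := Set.countable_coe_iff.mpr hC
  exact not_countable (α := K) (hinj.countable)

lemma key_list {K R : Type} [Field K] [Uncountable K] [CommRing R] [Algebra K R]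
    (C : Set (Ideal R)) (hC : C.Countable) (hne : C.Nonempty) (I : Ideal R)
    (hcov : ∀ x ∈ I, ∃ J ∈ C, x ∈ J) :
    ∀ (n : ℕ) (l : List R), l.length = n → (∀ x ∈ l, x ∈ I) → ∃ J ∈ C, ∀ x ∈ l, x ∈ J := by
  intro n
  induction n with
  | zero =>
    intro l hl _
    obtain ⟨J, hJ⟩ := hne
    exact ⟨J, hJ, fun x hx => absurd (List.length_eq_zero_iff.mp hl ▸ hx) List.not_mem_nil⟩
  | succ n ih =>
    intro l hl hmem
    match l with
    | x :: l' =>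
      match l' with
      | [] =>
        obtain ⟨J, hJC, hJ⟩ := hcov x (hmem x (by simp))
        exact ⟨J, hJC, by simpa using hJ⟩
      | y :: xs =>
        have hx : x ∈ I := hmem x (by simp)
        have hy : y ∈ I := hmem y (by simp)
        have hxs : ∀ z ∈ xs, z ∈ I := fun z hz => hmem z (by simp [hz])
        have hlen : (xs.length + 1) = n := by simpa using hl
        have hstep : ∀ t : K, ∃ J ∈ C, ∀ z ∈ (x + algebraMap K R t * y) :: xs, z ∈ J := by
          intro t
          refine ih ((x + algebraMap K R t * y) :: xs) (by simpa using hlen) ?_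
          intro z hz
          rcases List.mem_cons.mp hz with h | h
          · subst h; exact I.add_mem hx (I.mul_mem_left _ hy)
          · exact hxs z h
        choose f hfC hf using hstep
        obtain ⟨t, t', htt, hft⟩ := exists_ne_map_eq C hC f hfC
        set J := f t with hJdef
        refine ⟨J, hfC t, ?_⟩
        have h1 : x + algebraMap K R t * y ∈ J := hf t _ (by simp)
        have h2 : x + algebraMap K R t' * y ∈ J := hft ▸ hf t' _ (by simp)
        have hysub : algebraMap K R (t - t') * y ∈ J := by
          have := J.sub_mem h1 h2
          have heq : (x + algebraMap K R t * y) - (x + algebraMap K R t' * y)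
              = algebraMap K R (t - t') * y := by
            rw [map_sub]; ring
          rwa [heq] at this
        have hyJ : y ∈ J := by
          have := J.mul_mem_left (algebraMap K R (t - t')⁻¹) hysub
          rwa [← mul_assoc, ← map_mul, inv_mul_cancel₀ (sub_ne_zero.mpr htt), map_one,
            one_mul] at this
        have hxJ : x ∈ J := by
          have := J.sub_mem h1 (J.mul_mem_left (algebraMap K R t) hyJ)
          simpa using this
        intro z hz
        rcases List.mem_cons.mp hz with h | h
        · exact h ▸ hxJ
        · rcases List.mem_cons.mp h with h' | h'
          · exact h' ▸ hyJ
          · exact hf t z (by simp [h'])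

lemma countable_avoidance {K R : Type} [Field K] [Uncountable K] [CommRing R]
    [IsNoetherianRing R] [Algebra K R]
    (C : Set (Ideal R)) (hC : C.Countable) (hne : C.Nonempty) (I : Ideal R)
    (hcov : ∀ x ∈ I, ∃ J ∈ C, x ∈ J) : ∃ J ∈ C, I ≤ J := by
  obtain ⟨s, hs⟩ := IsNoetherian.noetherian I
  obtain ⟨J, hJC, hJ⟩ := key_list (K := K) C hC hne I hcov s.toList.length s.toList rfl
    (fun x hx => by rw [← hs]; exact Submodule.subset_span (by simpa using hx))
  refine ⟨J, hJC, ?_⟩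
  rw [← hs, Submodule.span_le]
  intro x hx
  exact hJ x (by simpa using hx)

/-- with T as in the construction, the maximal ideals of T are exactly
the (pairwise distinct) mT for m ∈ F, and QT is the Jacobson radical of T. -/
theorem stmt_19 (K : Type) [Field K] [Uncountable K]
    (R : Type) [CommRing R] [IsNoetherianRing R] [Algebra K R] (d : ℕ)
    (hcount : {m : Ideal R | m.IsMaximal}.Countable)
    (hinf : {m : Ideal R | m.IsMaximal}.Infinite)
    (hht : ∀ (m : Ideal R) (hm : m.IsMaximal),
      @ht R _ m hm.isPrime = (d : WithBot (WithTop ℕ)))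
    (F : Set (Ideal R)) (hFmax : ∀ m ∈ F, m.IsMaximal) (hF : F.Infinite)
    (hmaximal : ∀ G ⊆ {m : Ideal R | m.IsMaximal}, G.Infinite →
      sInf F ≤ sInf G → sInf G = sInf F)
 :
    letI T := Localization (outsideAll R F (fun m hm => (hFmax m hm).isPrime))
    {I : Ideal T | I.IsMaximal} = (fun m : Ideal R => m.map (algebraMap R T)) '' F ∧
    Set.InjOn (fun m : Ideal R => m.map (algebraMap R T)) F ∧
    (sInf F).map (algebraMap R T) = (⊥ : Ideal T).jacobson := by
  set S := outsideAll R F (fun m hm => (hFmax m hm).isPrime) with hSdef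
  set T := Localization S with hTdef
  have hFC : F.Countable := hcount.mono hFmax
  have hFne : F.Nonempty := hF.nonempty
  have hdisj : ∀ m ∈ F, Disjoint (S : Set R) (m : Set R) := by
    intro m hm
    rw [Set.disjoint_left]
    intro x hxS hxm
    exact hxS m hm hxm
  have hprime : ∀ m ∈ F, (Ideal.map (algebraMap R T) m).IsPrime := fun m hm =>
    IsLocalization.isPrime_of_isPrime_disjoint S T m (hFmax m hm).isPrime (hdisj m hm)
  have hcomap : ∀ m ∈ F, Ideal.comap (algebraMap R T) (Ideal.map (algebraMap R T) m) = m :=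
    fun m hm => IsLocalization.comap_map_of_isPrime_disjoint S T (hFmax m hm).isPrime
      (hdisj m hm)
  have hmax_mem : ∀ M : Ideal T, M.IsMaximal → ∃ m ∈ F, M = Ideal.map (algebraMap R T) m := by
    intro M hM
    set p := Ideal.comap (algebraMap R T) M with hpdef
    obtain ⟨hpprime, hpdisj⟩ := (IsLocalization.isPrime_iff_isPrime_disjoint S T M).mp hM.isPrime
    have hcov : ∀ x ∈ p, ∃ J ∈ F, x ∈ J := by
      intro x hx
      have hxS : x ∉ (S : Set R) := fun hxS => Set.disjoint_left.mp hpdisj hxS hx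
      by_contra h
      push_neg at h
      exact hxS (fun m hm => h m hm)
    obtain ⟨m, hmF, hpm⟩ := countable_avoidance (K := K) F hFC hFne p hcov
    refine ⟨m, hmF, ?_⟩
    have hMeq : Ideal.map (algebraMap R T) p = M := IsLocalization.map_comap S T M
    have hle : M ≤ Ideal.map (algebraMap R T) m := hMeq ▸ Ideal.map_mono hpm
    exact hM.eq_of_le (hprime m hmF).ne_top hle
  have hmap_max : ∀ m ∈ F, (Ideal.map (algebraMap R T) m).IsMaximal := by
    intro m hm
    obtain ⟨M, hM, hle⟩ := Ideal.exists_le_maximal _ (hprime m hm).ne_top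
    obtain ⟨m', hm'F, hMeq⟩ := hmax_mem M hM
    have hcle : m ≤ m' := by
      have := Ideal.comap_mono (f := algebraMap R T) hle
      rwa [hcomap m hm, hMeq, hcomap m' hm'F] at this
    have : m = m' := (hFmax m hm).eq_of_le (hFmax m' hm'F).ne_top hcle
    rwa [hMeq, ← this] at hM
  have hset : {J : Ideal T | J.IsMaximal} = (fun m : Ideal R => m.map (algebraMap R T)) '' F := by
    ext M
    simp only [Set.mem_setOf_eq, Set.mem_image]
    constructor
    · intro hM
      obtain ⟨m, hmF, heq⟩ := hmax_mem M hM
      exact ⟨m, hmF, heq.symm⟩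
    · rintro ⟨m, hmF, rfl⟩
      exact hmap_max m hmF
  refine ⟨hset, ?_, ?_⟩
  · intro m₁ h₁ m₂ h₂ heq
    have := congrArg (Ideal.comap (algebraMap R T)) heq
    rwa [hcomap m₁ h₁, hcomap m₂ h₂] at this
  · have hjac : (⊥ : Ideal T).jacobson = sInf {J : Ideal T | J.IsMaximal} := by
      unfold Ideal.jacobson
      congr 1
      ext J
      simp
    rw [hjac, hset]
    apply le_antisymm
    · apply le_sInf
      rintro J ⟨m, hmF, rfl⟩
      exact Ideal.map_mono (sInf_le hmF)
    · intro a ha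
      obtain ⟨⟨x, s⟩, hxs⟩ := IsLocalization.surj S a
      have hx : x ∈ sInf F := by
        rw [Ideal.mem_sInf]
        intro m hm
        have hamem : a ∈ Ideal.map (algebraMap R T) m :=
          Ideal.mem_sInf.mp ha ⟨m, hm, rfl⟩
        have h1 : algebraMap R T x ∈ Ideal.map (algebraMap R T) m := by
          rw [← hxs]
          exact Ideal.mul_mem_right _ _ hamem
        have h2 := Ideal.mem_comap.mpr h1
        rwa [hcomap m hm] at h2
      have hmem : algebraMap R T x ∈ Ideal.map (algebraMap R T) (sInf F) :=
        Ideal.mem_map_of_mem _ hx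
      have hu : IsUnit (algebraMap R T (s : R)) := IsLocalization.map_units T s
      have hmul : a * algebraMap R T (s : R) ∈ Ideal.map (algebraMap R T) (sInf F) := by
        rw [hxs]; exact hmem
      have h2 := Ideal.mul_mem_right (↑hu.unit⁻¹) _ hmul
      rwa [mul_assoc, IsUnit.mul_val_inv, mul_one] at h2
end
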